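/- arXiv:1907.09736 — 4 statements merged into one kernel-verified Lean document; each statement's English description precedes it below -/
import Mathlib

section
/- Let R be a commutative ring and let I_•, A_• be equivalent filtrations of R, each of which satisfies: for every N there exist Ñ ∈ ℕ and a finite subset {q_1,…,q_r} of the N-th ideal of the filtration such that the (N+Ñ)-th ideal of the filtration is contained in the ideal (q_1,…,q_r). Then R has the Artin approximation property for I_• if and only if R has the Artin approximation property for A_•. -/
/-- `R` has the Artin approximation property for the filtration `I`. -/
def HasAP {R : Type*} [CommRing R] (I : ℕ → Ideal R) : Prop :=
  ∀ (n s : ℕ) (F : Fin s → MvPolynomial (Fin n) R) (yhat : ℕ → Fin n → R),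
    (∀ N i, yhat (N + 1) i - yhat N i ∈ I (N + 1)) →
    (∀ N k, MvPolynomial.eval (yhat N) (F k) ∈ I (N + 1)) →
    ∀ N, ∃ y : Fin n → R,
      (∀ k, MvPolynomial.eval y (F k) = 0) ∧ ∀ i, y i - yhat N i ∈ I (N + 1)

/-- Two filtrations are equivalent: each is cofinally contained in the other. -/
def FiltEquiv {R : Type*} [CommRing R] (I A : ℕ → Ideal R) : Prop :=
  ∀ j : ℕ, (∃ j', I j' ≤ A j) ∧ (∃ j'', A j'' ≤ I j)

/-- The weak finite-generation condition on a filtration: for every `N` there are `N'` and a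
finite subset `{q_1, …, q_r}` of the `N`-th ideal with the `(N+N')`-th ideal contained in the
ideal generated by the `q`'s. -/
def WeakFG {R : Type*} [CommRing R] (A : ℕ → Ideal R) : Prop :=
  ∀ N : ℕ, ∃ (N' r : ℕ) (q : Fin r → R),
    (∀ t, q t ∈ A N) ∧ A (N + N') ≤ Ideal.span (Set.range q)

/-- For a formal solution w.r.t. an antitone filtration, any two terms with indices `≥ a`
differ by an element of `A (a+1)`. -/
lemma diff_mem_aux {R : Type*} [CommRing R] {A : ℕ → Ideal R} (hA : Antitone A)
    {n : ℕ} {yhat : ℕ → Fin n → R}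
    (h : ∀ N i, yhat (N + 1) i - yhat N i ∈ A (N + 1)) :
    ∀ (a b : ℕ), a ≤ b → ∀ i, yhat b i - yhat a i ∈ A (a + 1) := by
  intro a b hab
  induction b, hab using Nat.le_induction with
  | base => intro i; simp
  | succ b hab ih =>
    intro i
    have h2 : yhat (b + 1) i - yhat a i
        = (yhat (b + 1) i - yhat b i) + (yhat b i - yhat a i) := by ring
    rw [h2]
    exact Ideal.add_mem _ (hA (by omega) (h b i)) (ih i)

/-- Transfer of the AP along equivalence of filtrations (one direction). -/
lemma hasAP_transfer {R : Type*} [CommRing R] {I A : ℕ → Ideal R}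
    (hIanti : Antitone I) (hAanti : Antitone A)
    (h1 : ∀ j, ∃ j', I j' ≤ A j) (h2 : ∀ j, ∃ j'', A j'' ≤ I j)
    (hAP : HasAP I) : HasAP A := by
  intro n s F yhat hy hF N
  choose g hg using h2
  -- a monotone reindexing function
  set φ : ℕ → ℕ := fun M => N + M + (Finset.range (M + 2)).sup g with hφdef
  have hφmono : Monotone φ := by
    intro a b hab
    have : (Finset.range (a + 2)).sup g ≤ (Finset.range (b + 2)).sup g :=
      Finset.sup_mono (Finset.range_subset_range.mpr (by omega))
    simp only [hφdef]
    omega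
  have hφN : ∀ M, N ≤ φ M := fun M => by simp only [hφdef]; omega
  have hAI : ∀ M, A (φ M + 1) ≤ I (M + 1) := by
    intro M
    have hle : g (M + 1) ≤ φ M := by
      have : g (M + 1) ≤ (Finset.range (M + 2)).sup g :=
        Finset.le_sup (Finset.mem_range.mpr (by omega))
      simp only [hφdef]; omega
    exact (hAanti (by omega)).trans (hg (M + 1))
  set zhat : ℕ → Fin n → R := fun M => yhat (φ M) with hzdef
  have hz1 : ∀ M i, zhat (M + 1) i - zhat M i ∈ I (M + 1) := by
    intro M i
    exact hAI M (diff_mem_aux hAanti hy (φ M) (φ (M + 1)) (hφmono (by omega)) i)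
  have hz2 : ∀ M k, MvPolynomial.eval (zhat M) (F k) ∈ I (M + 1) := by
    intro M k
    exact hAI M (hF (φ M) k)
  obtain ⟨j', hj'⟩ := h1 (N + 1)
  obtain ⟨y, hy1, hy2⟩ := hAP n s F zhat hz1 hz2 j'
  refine ⟨y, hy1, fun i => ?_⟩
  have ha : y i - zhat j' i ∈ A (N + 1) := hj' (hIanti (by omega) (hy2 i))
  have hb : zhat j' i - yhat N i ∈ A (N + 1) :=
    diff_mem_aux hAanti hy N (φ j') (hφN j') i
  have : y i - yhat N i = (y i - zhat j' i) + (zhat j' i - yhat N i) := by ring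
  rw [this]
  exact Ideal.add_mem _ ha hb

/-- For equivalent filtrations `I_•` and `A_•`, each satisfying the weak
finite-generation condition, `R` has AP for `I_•` iff it has AP for `A_•`. -/
theorem hasAP_iff_of_filtEquiv
    {R : Type*} [CommRing R] (I A : ℕ → Ideal R)
    (hI0 : I 0 = ⊤) (hIanti : Antitone I)
    (hA0 : A 0 = ⊤) (hAanti : Antitone A)
    (hequiv : FiltEquiv I A)
    (hIfg : WeakFG I) (hAfg : WeakFG A) :
    HasAP I ↔ HasAP A := by
  constructor
  · exact hasAP_transfer hIanti hAanti (fun j => (hequiv j).1) (fun j => (hequiv j).2)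
  · exact hasAP_transfer hAanti hIanti (fun j => (hequiv j).2) (fun j => (hequiv j).1)
end

section
/- Let (R, 𝔪) be a Noetherian local commutative ring which has the Artin approximation property for the 𝔪-adic filtration (𝔪^j)_{j∈ℕ}. Let I_• be any filtration of R such that for every j there exists d_j ∈ ℕ with I_{d_j} ⊆ 𝔪^j. Then R has the Artin approximation property for I_•. -/
/-- Let `(R, 𝔪)` be a Noetherian local ring with AP for the `𝔪`-adic
filtration. Any filtration `I_•` with `I_{d_j} ⊆ 𝔪^j` for suitable `d_j` also has AP. -/
theorem hasAP_of_le_maximalIdeal_pow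
    {R : Type*} [CommRing R] [IsNoetherianRing R] [IsLocalRing R]
    (hAP : HasAP (fun j => IsLocalRing.maximalIdeal R ^ j))
    (I : ℕ → Ideal R) (hI0 : I 0 = ⊤) (hIanti : Antitone I)
    (hsub : ∀ j : ℕ, ∃ d : ℕ, I d ≤ IsLocalRing.maximalIdeal R ^ j) :
    HasAP I := by
  classical
  intro n s F yhat hdiff hF N
  set 𝔪 := IsLocalRing.maximalIdeal R with h𝔪
  -- telescoping
  have key : ∀ a b, a ≤ b → ∀ i, yhat b i - yhat a i ∈ I (a + 1) := by
    intro a b hab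
    induction b, hab using Nat.le_induction with
    | base => intro i; simpa using (I (a + 1)).zero_mem
    | succ b hab ih =>
      intro i
      have h1 := hdiff b i
      have heq : yhat (b + 1) i - yhat a i
          = (yhat (b + 1) i - yhat b i) + (yhat b i - yhat a i) := by ring
      rw [heq]
      exact add_mem (hIanti (by omega) h1) (ih i)
  -- generators of J := I (N+1)
  obtain ⟨m, g, hg⟩ := Submodule.fg_iff_exists_fin_generating_family.mp
      (IsNoetherian.noetherian (I (N + 1)))
  -- members of range g are in I (N+1)
  have hgmem : ∀ t, g t ∈ I (N + 1) := by
    intro t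
    rw [← hg]
    exact Submodule.subset_span (Set.mem_range_self t)
  -- Artin–Rees
  obtain ⟨c, hc⟩ := Ideal.exists_pow_inf_eq_pow_smul 𝔪 (I (N + 1) : Submodule R R)
  have htop : ∀ K : Ideal R, K • (⊤ : Submodule R R) = K := by
    intro K
    rw [smul_eq_mul, Ideal.mul_top]
  -- choose d's
  choose d hd using hsub
  -- increasing index function
  set e : ℕ → ℕ := fun j => N + (Finset.range (j + 1)).sup (fun k => d (c + k + 1)) + j
    with he
  have he_mono : Monotone e := by
    intro a b hab
    have h2 : ((Finset.range (a + 1)).sup fun k => d (c + k + 1))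
        ≤ (Finset.range (b + 1)).sup fun k => d (c + k + 1) :=
      Finset.sup_mono (Finset.range_subset_range.mpr (by omega))
    simp only [he]
    omega
  have heN : ∀ j, N ≤ e j := by intro j; simp only [he]; omega
  have heD : ∀ j, d (c + j + 1) ≤ e j := by
    intro j
    have h2 : d (c + j + 1) ≤ (Finset.range (j + 1)).sup fun k => d (c + k + 1) :=
      Finset.le_sup (f := fun k => d (c + k + 1)) (Finset.self_mem_range_succ j)
    simp only [he]; omega
  have hIe : ∀ j, I (e j) ≤ 𝔪 ^ (c + j + 1) := fun j =>
    le_trans (hIanti (heD j)) (hd _)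
  set z : ℕ → Fin n → R := fun j => yhat (e j) with hz
  have hzJ : ∀ j i, z (j + 1) i - z j i ∈ I (N + 1) := by
    intro j i
    exact hIanti (by have := heN j; omega) (key (e j) (e (j + 1)) (he_mono (by omega)) i)
  have hzM : ∀ j i, z (j + 1) i - z j i ∈ 𝔪 ^ (c + j + 1) := by
    intro j i
    refine hIe j (hIanti (by omega) (key (e j) (e (j + 1)) (he_mono (by omega)) i))
  -- lift the increments through the generators
  have hlift : ∀ j i, ∃ v : Fin m → R, (∀ t, v t ∈ 𝔪 ^ (j + 1)) ∧
      ∑ t, v t * g t = z (j + 1) i - z j i := by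
    intro j i
    have h1 : z (j + 1) i - z j i ∈ 𝔪 ^ (c + j + 1) • (⊤ : Submodule R R) ⊓
        (I (N + 1) : Submodule R R) := by
      rw [htop]
      exact ⟨hzM j i, hzJ j i⟩
    rw [hc (c + j + 1) (by omega)] at h1
    have h2 : z (j + 1) i - z j i ∈ 𝔪 ^ (j + 1) • Submodule.span R (Set.range g) := by
      rw [hg]
      have hle : 𝔪 ^ c • (⊤ : Submodule R R) ⊓ (I (N + 1) : Submodule R R)
          ≤ (I (N + 1) : Submodule R R) := inf_le_right
      have hcc : c + j + 1 - c = j + 1 := by omega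
      rw [hcc] at h1
      exact Submodule.smul_mono (le_refl (𝔪 ^ (j + 1))) hle h1
    rw [Submodule.mem_ideal_smul_span_iff_exists_sum] at h2
    obtain ⟨a, ha, hsum⟩ := h2
    refine ⟨fun t => a t, fun t => ha t, ?_⟩
    rw [← hsum, Finsupp.sum_fintype]
    · simp [mul_comm]
    · intro t; simp
  choose v hv1 hv2 using hlift
  -- initial lift
  have h0 : ∀ i, ∃ u : Fin m → R, ∑ t, u t * g t = z 0 i - yhat N i := by
    intro i
    have hmem : z 0 i - yhat N i ∈ I (N + 1) := key N (e 0) (heN 0) i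
    rw [← hg, Submodule.mem_span_range_iff_exists_fun] at hmem
    obtain ⟨uu, hu⟩ := hmem
    exact ⟨uu, by simpa [smul_eq_mul] using hu⟩
  choose u0 hu0 using h0
  set u : ℕ → Fin n → Fin m → R :=
    fun j i t => u0 i t + ∑ l ∈ Finset.range j, v l i t with hu
  have hustep : ∀ j i t, u (j + 1) i t = u j i t + v j i t := by
    intro j i t
    simp [hu, Finset.sum_range_succ]
    ring
  have husum : ∀ j i, ∑ t, u j i t * g t = z j i - yhat N i := by
    intro j
    induction j with
    | zero => intro i; simp [hu, hu0]
    | succ j ih =>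
      intro i
      calc ∑ t, u (j + 1) i t * g t
          = ∑ t, u j i t * g t + ∑ t, v j i t * g t := by
            rw [← Finset.sum_add_distrib]
            refine Finset.sum_congr rfl fun t _ => ?_
            rw [hustep]; ring
        _ = (z j i - yhat N i) + (z (j + 1) i - z j i) := by rw [ih i, hv2 j i]
        _ = z (j + 1) i - yhat N i := by ring
  -- the augmented system
  set ι1 : Fin n → Fin (n + n * m) := fun i => finSumFinEquiv (Sum.inl i) with hι1
  set ι2 : Fin n → Fin m → Fin (n + n * m) :=
    fun i t => finSumFinEquiv (Sum.inr (finProdFinEquiv (i, t))) with hι2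
  set G : Fin (s + n) → MvPolynomial (Fin (n + n * m)) R := fun k =>
    Sum.elim (fun k => MvPolynomial.rename ι1 (F k))
      (fun i => MvPolynomial.X (ι1 i) - MvPolynomial.C (yhat N i)
        - ∑ t, MvPolynomial.C (g t) * MvPolynomial.X (ι2 i t))
      (finSumFinEquiv.symm k) with hG
  set w : ℕ → Fin (n + n * m) → R := fun j p =>
    Sum.elim (z j)
      (fun q => u j (finProdFinEquiv.symm q).1 (finProdFinEquiv.symm q).2)
      (finSumFinEquiv.symm p) with hw
  have hwι1 : ∀ j i, w j (ι1 i) = z j i := by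
    intro j i; simp only [hw, hι1, Equiv.symm_apply_apply, Sum.elim_inl]
  have hwι2 : ∀ j i t, w j (ι2 i t) = u j i t := by
    intro j i t; simp only [hw, hι2, Equiv.symm_apply_apply, Sum.elim_inr]
  have hwcomp : ∀ j, w j ∘ ι1 = z j := by
    intro j; funext i; exact hwι1 j i
  have hw1 : ∀ j p, w (j + 1) p - w j p ∈ 𝔪 ^ (j + 1) := by
    intro j p
    rcases hq : finSumFinEquiv.symm p with i | q
    · have heq2 : w (j + 1) p - w j p = z (j + 1) i - z j i := by
        simp only [hw, hq, Sum.elim_inl]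
      rw [heq2]
      exact Ideal.pow_le_pow_right (by omega) (hzM j i)
    · have heq2 : w (j + 1) p - w j p =
          u (j + 1) (finProdFinEquiv.symm q).1 (finProdFinEquiv.symm q).2
            - u j (finProdFinEquiv.symm q).1 (finProdFinEquiv.symm q).2 := by
        simp only [hw, hq, Sum.elim_inr]
      rw [heq2, hustep]
      simpa using hv1 j (finProdFinEquiv.symm q).1 (finProdFinEquiv.symm q).2
  have hw2 : ∀ j k, MvPolynomial.eval (w j) (G k) ∈ 𝔪 ^ (j + 1) := by
    intro j k
    rcases hq : finSumFinEquiv.symm k with kk | i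
    · have : MvPolynomial.eval (w j) (G k)
          = MvPolynomial.eval (z j) (F kk) := by
        simp only [hG, hq, Sum.elim_inl, MvPolynomial.eval_rename, hwcomp]
      rw [this]
      refine Ideal.pow_le_pow_right (by omega) (hIe j ?_)
      exact hIanti (by omega) (hF (e j) kk)
    · have : MvPolynomial.eval (w j) (G k)
          = z j i - yhat N i - ∑ t, g t * u j i t := by
        simp [hG, hq, hwι1, hwι2]
      rw [this]
      have : z j i - yhat N i - ∑ t, g t * u j i t = 0 := by
        rw [show ∑ t, g t * u j i t = ∑ t, u j i t * g t from
          Finset.sum_congr rfl fun t _ => mul_comm _ _, husum]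
        ring
      rw [this]
      exact Submodule.zero_mem _
  obtain ⟨Y, hY, -⟩ := hAP (n + n * m) (s + n) G w hw1 hw2 0
  refine ⟨fun i => Y (ι1 i), ?_, ?_⟩
  · intro k
    have h := hY (finSumFinEquiv (Sum.inl k))
    simpa only [hG, Equiv.symm_apply_apply, Sum.elim_inl, MvPolynomial.eval_rename,
      Function.comp_def] using h
  · intro i
    have h := hY (finSumFinEquiv (Sum.inr i))
    simp only [hG, Equiv.symm_apply_apply, Sum.elim_inr, map_sub, map_sum, map_mul,
      MvPolynomial.eval_X, MvPolynomial.eval_C, sub_eq_zero] at h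
    rw [h]
    exact Submodule.sum_mem _ fun t _ => Ideal.mul_mem_right _ _ (hgmem t)
end

section
/- Let U ⊆ ℝ^m be open and Z ⊆ U a subset that is closed in U and discrete. For every function a : Z × ℕ^m → ℝ there exists f ∈ C^∞(U) such that for every z ∈ Z and every multi-index k ∈ ℕ^m the partial derivative ∂^k f(z) equals a(z,k). -/
open Filter Topology

noncomputable section

/-- The partial derivative in the direction of the `j`-th coordinate. -/
def pderivCoord {n : ℕ} (j : Fin n) (g : (Fin n → ℝ) → ℝ) : (Fin n → ℝ) → ℝ :=
  fun y => fderiv ℝ g y (Pi.single j 1)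

/-- The iterated partial derivative `∂^k` associated to the multi-index `k : Fin n → ℕ`. -/
def pderivMulti {n : ℕ} (k : Fin n → ℕ) (g : (Fin n → ℝ) → ℝ) : (Fin n → ℝ) → ℝ :=
  (List.finRange n).foldr (fun j h => (pderivCoord j)^[k j] h) g

open Metric

namespace MBL

variable {m : ℕ}

abbrev E (m : ℕ) := Fin m → ℝ

lemma pderivCoord_eq_comp (j : Fin m) (f : E m → ℝ) :
    pderivCoord j f
      = (ContinuousLinearMap.apply ℝ ℝ (Pi.single j 1 : E m)) ∘ (fderiv ℝ f) := rfl

lemma norm_apply_single_le (j : Fin m) :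
    ‖ContinuousLinearMap.apply ℝ ℝ (Pi.single j 1 : E m)‖ ≤ 1 := by
  apply ContinuousLinearMap.opNorm_le_bound _ zero_le_one
  intro L
  have : ‖(ContinuousLinearMap.apply ℝ ℝ (Pi.single j 1 : E m)) L‖
      = ‖L (Pi.single j 1 : E m)‖ := rfl
  rw [this, one_mul]
  calc ‖L (Pi.single j 1 : E m)‖ ≤ ‖L‖ * ‖(Pi.single j 1 : E m)‖ := L.le_opNorm _
  _ = ‖L‖ := by rw [Pi.norm_single]; simp

lemma ContDiffTop.pderivCoord {f : E m → ℝ} (hf : ContDiff ℝ (⊤ : ℕ∞) f) (j : Fin m) :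
    ContDiff ℝ (⊤ : ℕ∞) (pderivCoord j f) := by
  rw [pderivCoord_eq_comp]
  exact (ContinuousLinearMap.apply ℝ ℝ _).contDiff.comp
    (hf.fderiv_right (m := (⊤:ℕ∞)) (by simp))

lemma norm_iteratedFDeriv_pderivCoord_le {f : E m → ℝ} (hf : ContDiff ℝ (⊤ : ℕ∞) f)
    (j : Fin m) (N : ℕ) (x : E m) :
    ‖iteratedFDeriv ℝ N (pderivCoord j f) x‖ ≤ ‖iteratedFDeriv ℝ (N + 1) f x‖ := by
  rw [pderivCoord_eq_comp,
    ContinuousLinearMap.iteratedFDeriv_comp_left _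
      (hf.fderiv_right (m := (⊤:ℕ∞)) (by simp)).contDiffAt (by exact_mod_cast le_top)]
  calc ‖(ContinuousLinearMap.apply ℝ ℝ (Pi.single j 1 : E m)).compContinuousMultilinearMap
        (iteratedFDeriv ℝ N (fderiv ℝ f) x)‖
      ≤ ‖ContinuousLinearMap.apply ℝ ℝ (Pi.single j 1 : E m)‖
          * ‖iteratedFDeriv ℝ N (fderiv ℝ f) x‖ :=
        ContinuousLinearMap.norm_compContinuousMultilinearMap_le _ _
    _ ≤ 1 * ‖iteratedFDeriv ℝ N (fderiv ℝ f) x‖ := by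
        gcongr; exact norm_apply_single_le j
    _ = ‖iteratedFDeriv ℝ (N + 1) f x‖ := by rw [one_mul, norm_iteratedFDeriv_fderiv]


variable {ι : Type*}

def Bnd (F : ι → E m → ℝ) : Prop :=
  ∀ N : ℕ, ∃ v : ι → ℝ, Summable v ∧ ∀ i x, ‖iteratedFDeriv ℝ N (F i) x‖ ≤ v i

variable {F : ι → E m → ℝ}

lemma Bnd.summable_apply (hB : Bnd F) (x : E m) : Summable (fun i => F i x) := by
  obtain ⟨v, hv, hle⟩ := hB 0
  exact Summable.of_norm_bounded hv (fun i => by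
    simpa [norm_iteratedFDeriv_zero] using hle i x)

lemma norm_fderiv_le_of_bound {f : E m → ℝ} {v : ℝ} {x : E m}
    (h : ‖iteratedFDeriv ℝ 1 f x‖ ≤ v) : ‖fderiv ℝ f x‖ ≤ v := by
  have h0 : ‖iteratedFDeriv ℝ 0 (fderiv ℝ f) x‖ = ‖iteratedFDeriv ℝ (0+1) f x‖ :=
    norm_iteratedFDeriv_fderiv
  rw [norm_iteratedFDeriv_zero] at h0
  rw [h0]; exact h

lemma Bnd.pcoord (hB : Bnd F) (hsm : ∀ i, ContDiff ℝ (⊤ : ℕ∞) (F i)) (j : Fin m) :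
    Bnd (fun i => pderivCoord j (F i)) := by
  intro N
  obtain ⟨v, hv, hle⟩ := hB (N + 1)
  exact ⟨v, hv, fun i x =>
    (norm_iteratedFDeriv_pderivCoord_le (hsm i) j N x).trans (hle i x)⟩

lemma pderivCoord_tsum (hsm : ∀ i, ContDiff ℝ (⊤ : ℕ∞) (F i)) (hB : Bnd F) (j : Fin m) :
    pderivCoord j (fun x => ∑' i, F i x) = fun x => ∑' i, pderivCoord j (F i) x := by
  obtain ⟨v, hv, hle⟩ := hB 1
  have hd : ∀ i, Differentiable ℝ (F i) := fun i =>
    (hsm i).differentiable (by simp)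
  have hf' : ∀ i x, ‖fderiv ℝ (F i) x‖ ≤ v i := fun i x =>
    norm_fderiv_le_of_bound (hle i x)
  funext x
  show fderiv ℝ (fun y => ∑' i, F i y) x (Pi.single j 1) = _
  rw [fderiv_tsum_apply hv hd hf' (hB.summable_apply x) x]
  exact (ContinuousLinearMap.apply ℝ ℝ (Pi.single j 1 : E m)).map_tsum
    (Summable.of_norm_bounded hv (fun i => hf' i x))

lemma contDiff_iterate_pderivCoord {f : E m → ℝ} (hf : ContDiff ℝ (⊤ : ℕ∞) f)
    (j : Fin m) (n : ℕ) : ContDiff ℝ (⊤ : ℕ∞) ((pderivCoord j)^[n] f) := by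
  induction n with
  | zero => exact hf
  | succ n ih => rw [Function.iterate_succ_apply']; exact ContDiffTop.pderivCoord ih j

lemma Bnd.iterate_pcoord (hB : Bnd F) (hsm : ∀ i, ContDiff ℝ (⊤ : ℕ∞) (F i))
    (j : Fin m) (n : ℕ) : Bnd (fun i => (pderivCoord j)^[n] (F i)) := by
  induction n with
  | zero => exact hB
  | succ n ih =>
      have := ih.pcoord (fun i => contDiff_iterate_pderivCoord (hsm i) j n) j
      simpa [Function.iterate_succ_apply'] using this

lemma iterate_pderivCoord_tsum (hsm : ∀ i, ContDiff ℝ (⊤ : ℕ∞) (F i)) (hB : Bnd F)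
    (j : Fin m) (n : ℕ) :
    (pderivCoord j)^[n] (fun x => ∑' i, F i x)
      = fun x => ∑' i, (pderivCoord j)^[n] (F i) x := by
  induction n with
  | zero => rfl
  | succ n ih =>
      rw [Function.iterate_succ_apply', ih,
        pderivCoord_tsum (fun i => contDiff_iterate_pderivCoord (hsm i) j n)
          (hB.iterate_pcoord hsm j n) j]
      simp only [Function.iterate_succ_apply']

/-- fold of iterated coordinate derivatives along a list of coordinates -/
def foldD (k : Fin m → ℕ) (l : List (Fin m)) (f : E m → ℝ) : E m → ℝ :=
  l.foldr (fun j h => (pderivCoord j)^[k j] h) f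

lemma pderivMulti_eq_foldD (k : Fin m → ℕ) (f : E m → ℝ) :
    pderivMulti k f = foldD k (List.finRange m) f := rfl

lemma foldD_smooth {f : E m → ℝ} (hf : ContDiff ℝ (⊤ : ℕ∞) f) (k : Fin m → ℕ)
    (l : List (Fin m)) : ContDiff ℝ (⊤ : ℕ∞) (foldD k l f) := by
  induction l with
  | nil => exact hf
  | cons j l ih => exact contDiff_iterate_pderivCoord ih j (k j)

lemma Bnd.fold (hB : Bnd F) (hsm : ∀ i, ContDiff ℝ (⊤ : ℕ∞) (F i)) (k : Fin m → ℕ)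
    (l : List (Fin m)) : Bnd (fun i => foldD k l (F i)) := by
  induction l with
  | nil => exact hB
  | cons j l ih =>
      exact ih.iterate_pcoord (fun i => foldD_smooth (hsm i) k l) j (k j)

lemma foldD_tsum (hsm : ∀ i, ContDiff ℝ (⊤ : ℕ∞) (F i)) (hB : Bnd F) (k : Fin m → ℕ)
    (l : List (Fin m)) :
    foldD k l (fun x => ∑' i, F i x) = fun x => ∑' i, foldD k l (F i) x := by
  induction l with
  | nil => rfl
  | cons j l ih =>
      show (pderivCoord j)^[k j] (foldD k l fun x => ∑' i, F i x) = _
      rw [ih, iterate_pderivCoord_tsum (fun i => foldD_smooth (hsm i) k l)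
        (hB.fold hsm k l) j (k j)]
      rfl

lemma pderivMulti_tsum (hsm : ∀ i, ContDiff ℝ (⊤ : ℕ∞) (F i)) (hB : Bnd F)
    (k : Fin m → ℕ) (x : E m) :
    pderivMulti k (fun y => ∑' i, F i y) x = ∑' i, pderivMulti k (F i) x := by
  simp only [pderivMulti_eq_foldD]
  rw [foldD_tsum hsm hB]


/-! ### Monomials -/

def P (k : Fin m → ℕ) : E m → ℝ := fun x => ∏ i, x i ^ k i

lemma contDiff_P (k : Fin m → ℕ) : ContDiff ℝ (⊤ : ℕ∞) (P k) := by
  have h : ∀ (s : Finset (Fin m)), ContDiff ℝ (⊤ : ℕ∞) (fun x : E m => ∏ i ∈ s, x i ^ k i) := by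
    intro s
    induction s using Finset.induction with
    | empty => simpa using contDiff_const
    | insert _ _ hj ih =>
        simp only [Finset.prod_insert hj]
        exact ((contDiff_apply ℝ ℝ _).pow _).mul ih
  exact h Finset.univ

lemma hasFDerivAt_P (k : Fin m → ℕ) (x : E m) :
    HasFDerivAt (P k)
      (∑ i, (∏ l ∈ Finset.univ.erase i, x l ^ k l) •
        (((k i : ℝ) * x i ^ (k i - 1)) • ContinuousLinearMap.proj (R := ℝ)
          (φ := fun _ : Fin m => ℝ) i)) x := by
  apply HasFDerivAt.finset_prod
  intro i _
  exact (hasDerivAt_pow (k i) (x i)).comp_hasFDerivAt x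
    (ContinuousLinearMap.proj (R := ℝ) (φ := fun _ : Fin m => ℝ) i).hasFDerivAt

lemma pderivCoord_cP (j : Fin m) (c : ℝ) (k : Fin m → ℕ) :
    pderivCoord j (fun x => c * P k x)
      = fun x => (c * (k j : ℝ)) * P (Function.update k j (k j - 1)) x := by
  funext x
  show fderiv ℝ (fun x => c * P k x) x (Pi.single j 1) = _
  rw [fderiv_const_mul ((contDiff_P k).differentiable (by simp)).differentiableAt c,
    (hasFDerivAt_P k x).fderiv]
  simp only [ContinuousLinearMap.smul_apply, ContinuousLinearMap.coe_sum', Finset.sum_apply,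
    ContinuousLinearMap.proj_apply, smul_eq_mul]
  rw [Finset.sum_eq_single j]
  · have hP : P (Function.update k j (k j - 1)) x
        = x j ^ (k j - 1) * ∏ l ∈ Finset.univ.erase j, x l ^ k l := by
      rw [P, ← Finset.mul_prod_erase Finset.univ _ (Finset.mem_univ j)]
      congr 1
      · rw [Function.update_self]
      · exact Finset.prod_congr rfl fun l hl =>
          by rw [Function.update_of_ne (Finset.ne_of_mem_erase hl)]
    rw [hP, Pi.single_eq_same]
    ring
  · intro i _ hij
    rw [Pi.single_apply, if_neg hij]
    ring
  · intro h; exact absurd (Finset.mem_univ j) h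

lemma iterate_pderivCoord_cP (j : Fin m) (n : ℕ) (c : ℝ) (k : Fin m → ℕ) :
    (pderivCoord j)^[n] (fun x => c * P k x)
      = fun x => (c * ((k j).descFactorial n : ℝ)) * P (Function.update k j (k j - n)) x := by
  induction n with
  | zero => simp [Function.update_eq_self]
  | succ n ih =>
      rw [Function.iterate_succ_apply', ih, pderivCoord_cP]
      rw [Function.update_self, Function.update_idem]
      have h1 : k j - n - 1 = k j - (n + 1) := by omega
      have h2 : ((k j).descFactorial (n + 1) : ℝ)
          = ((k j).descFactorial n : ℝ) * ((k j - n : ℕ) : ℝ) := by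
        rw [Nat.descFactorial_succ]; push_cast; ring
      rw [h1, h2]
      funext x; ring

lemma foldD_cP (idx : Fin m → ℕ) (l : List (Fin m)) (hl : l.Nodup) (c : ℝ) (k : Fin m → ℕ) :
    foldD idx l (fun x => c * P k x)
      = fun x => (c * (l.map (fun i => ((k i).descFactorial (idx i) : ℝ))).prod)
          * P (fun i => if i ∈ l then k i - idx i else k i) x := by
  induction l generalizing k with
  | nil => simp [foldD, P]
  | cons j l ih =>
      obtain ⟨hjl, hl'⟩ := List.nodup_cons.mp hl
      show (pderivCoord j)^[idx j] (foldD idx l (fun x => c * P k x)) = _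
      rw [ih hl', iterate_pderivCoord_cP]
      have hkj : (if j ∈ l then k j - idx j else k j) = k j := by simp [hjl]
      have hupd : Function.update (fun i => if i ∈ l then k i - idx i else k i) j
            ((if j ∈ l then k j - idx j else k j) - idx j)
          = fun i => if i ∈ j :: l then k i - idx i else k i := by
        funext i
        by_cases hij : i = j
        · subst hij
          rw [Function.update_self, hkj]
          simp
        · rw [Function.update_of_ne hij]
          simp [hij]
      rw [hupd]
      funext x
      rw [hkj]
      simp only [List.map_cons, List.prod_cons]
      ring

lemma pderivMulti_cP (idx : Fin m → ℕ) (c : ℝ) (k : Fin m → ℕ) :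
    pderivMulti idx (fun x => c * P k x)
      = fun x => (c * ∏ i, ((k i).descFactorial (idx i) : ℝ))
          * P (fun i => k i - idx i) x := by
  rw [pderivMulti_eq_foldD, foldD_cP idx _ (List.nodup_finRange m) c k]
  have h1 : (List.map (fun i => ((k i).descFactorial (idx i) : ℝ)) (List.finRange m)).prod
      = ∏ i, ((k i).descFactorial (idx i) : ℝ) := (Fin.prod_univ_def _).symm
  have h2 : (fun i => if i ∈ List.finRange m then k i - idx i else k i)
      = fun i => k i - idx i := by
    funext i; simp [List.mem_finRange]
  rw [h1, h2]

lemma pderivMulti_cP_zero (idx : Fin m → ℕ) (c : ℝ) (k : Fin m → ℕ) :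
    pderivMulti idx (fun x => c * P k x) 0
      = if k = idx then c * ∏ i, ((k i).factorial : ℝ) else 0 := by
  rw [pderivMulti_cP]
  by_cases hk : k = idx
  · subst hk
    rw [if_pos rfl]
    have h1 : ∀ i : Fin m, (k i).descFactorial (k i) = (k i).factorial := fun i =>
      Nat.descFactorial_self _
    have h2 : P (fun i => k i - k i) 0 = 1 := by
      simp [P]
    simp only [h1, h2, mul_one]
  · rw [if_neg hk]
    obtain ⟨i₀, hi₀⟩ := Function.ne_iff.mp hk
    rcases lt_or_gt_of_ne hi₀ with h | h
    · -- k i₀ < idx i₀ : descFactorial vanishes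
      have : ((k i₀).descFactorial (idx i₀) : ℝ) = 0 := by
        rw [Nat.descFactorial_eq_zero_iff_lt.mpr h]; norm_num
      show (c * ∏ i, ((k i).descFactorial (idx i) : ℝ)) * P (fun i => k i - idx i) 0 = 0
      rw [Finset.prod_eq_zero (Finset.mem_univ i₀) this]
      ring
    · -- idx i₀ < k i₀ : monomial vanishes at 0
      have : P (fun i => k i - idx i) 0 = 0 := by
        rw [P]
        exact Finset.prod_eq_zero (Finset.mem_univ i₀)
          (by rw [Pi.zero_apply]; exact zero_pow (by omega))
      show (c * ∏ i, ((k i).descFactorial (idx i) : ℝ)) * P (fun i => k i - idx i) 0 = 0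
      rw [this, mul_zero]


/-! ### Locality -/

lemma pderivCoord_congr {V : Set (E m)} (hV : IsOpen V) {f g : E m → ℝ}
    (h : Set.EqOn f g V) (j : Fin m) :
    Set.EqOn (pderivCoord j f) (pderivCoord j g) V := by
  intro x hx
  show fderiv ℝ f x _ = fderiv ℝ g x _
  rw [Filter.EventuallyEq.fderiv_eq (h.eventuallyEq_of_mem (hV.mem_nhds hx))]

lemma iterate_pderivCoord_congr {V : Set (E m)} (hV : IsOpen V) {f g : E m → ℝ}
    (h : Set.EqOn f g V) (j : Fin m) (n : ℕ) :
    Set.EqOn ((pderivCoord j)^[n] f) ((pderivCoord j)^[n] g) V := by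
  induction n with
  | zero => exact h
  | succ n ih =>
      simp only [Function.iterate_succ_apply']
      exact pderivCoord_congr hV ih j

lemma foldD_congr {V : Set (E m)} (hV : IsOpen V) {f g : E m → ℝ}
    (h : Set.EqOn f g V) (k : Fin m → ℕ) (l : List (Fin m)) :
    Set.EqOn (foldD k l f) (foldD k l g) V := by
  induction l with
  | nil => exact h
  | cons j l ih => exact iterate_pderivCoord_congr hV ih j (k j)

lemma pderivMulti_congr {V : Set (E m)} (hV : IsOpen V) {f g : E m → ℝ}
    (h : Set.EqOn f g V) (k : Fin m → ℕ) {x : E m} (hx : x ∈ V) :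
    pderivMulti k f x = pderivMulti k g x := by
  rw [pderivMulti_eq_foldD, pderivMulti_eq_foldD]
  exact foldD_congr hV h k _ hx

/-! ### Translation -/

lemma contDiff_comp_sub {f : E m → ℝ} (hf : ContDiff ℝ (⊤ : ℕ∞) f) (z : E m) :
    ContDiff ℝ (⊤ : ℕ∞) (fun x => f (x - z)) :=
  hf.comp (contDiff_id.sub contDiff_const)

lemma pderivCoord_comp_sub {f : E m → ℝ} (hf : ContDiff ℝ (⊤ : ℕ∞) f) (z : E m) (j : Fin m) :
    pderivCoord j (fun x => f (x - z)) = fun x => pderivCoord j f (x - z) := by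
  funext x
  show fderiv ℝ (fun x => f (x - z)) x _ = fderiv ℝ f (x - z) _
  have hd : HasFDerivAt f (fderiv ℝ f (x - z)) (x - z) :=
    ((hf.differentiable (by simp)) (x - z)).hasFDerivAt
  have hsub : HasFDerivAt (fun y : E m => y - z) (ContinuousLinearMap.id ℝ (E m)) x :=
    (hasFDerivAt_id x).sub_const z
  have hcomp : HasFDerivAt (fun x => f (x - z))
      ((fderiv ℝ f (x - z)).comp (ContinuousLinearMap.id ℝ (E m))) x := hd.comp x hsub
  rw [hcomp.fderiv]
  simp

lemma iterate_pderivCoord_comp_sub {f : E m → ℝ} (hf : ContDiff ℝ (⊤ : ℕ∞) f) (z : E m)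
    (j : Fin m) (n : ℕ) :
    (pderivCoord j)^[n] (fun x => f (x - z)) = fun x => (pderivCoord j)^[n] f (x - z) := by
  induction n with
  | zero => rfl
  | succ n ih =>
      simp only [Function.iterate_succ_apply', ih]
      exact pderivCoord_comp_sub (contDiff_iterate_pderivCoord hf j n) z j

lemma foldD_comp_sub {f : E m → ℝ} (hf : ContDiff ℝ (⊤ : ℕ∞) f) (z : E m)
    (k : Fin m → ℕ) (l : List (Fin m)) :
    foldD k l (fun x => f (x - z)) = fun x => foldD k l f (x - z) := by
  induction l with
  | nil => rfl
  | cons j l ih =>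
      show (pderivCoord j)^[k j] (foldD k l fun x => f (x - z)) = _
      rw [ih, iterate_pderivCoord_comp_sub (foldD_smooth hf k l) z j (k j)]
      rfl

lemma pderivMulti_comp_sub {f : E m → ℝ} (hf : ContDiff ℝ (⊤ : ℕ∞) f) (z : E m)
    (k : Fin m → ℕ) (x : E m) :
    pderivMulti k (fun y => f (y - z)) x = pderivMulti k f (x - z) := by
  simp only [pderivMulti_eq_foldD]
  rw [foldD_comp_sub hf z k]


/-! ### Bump-localized monomials and scaling -/

def bump (m : ℕ) : ContDiffBump (0 : E m) := ⟨1, 2, one_pos, one_lt_two⟩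

def psi (k : Fin m → ℕ) : E m → ℝ := fun x => P k x * bump m x

lemma psi_smooth (k : Fin m → ℕ) : ContDiff ℝ (⊤ : ℕ∞) (psi k) :=
  (contDiff_P k).mul (bump m).contDiff

lemma psi_compact_support (k : Fin m → ℕ) : HasCompactSupport (psi k) :=
  HasCompactSupport.mul_left (bump m).hasCompactSupport

lemma exists_bound {f : E m → ℝ} (hf : ContDiff ℝ (⊤ : ℕ∞) f) (hcs : HasCompactSupport f)
    (d : ℕ) : ∃ B : ℝ, 1 ≤ B ∧ ∀ N ≤ d, ∀ x, ‖iteratedFDeriv ℝ N f x‖ ≤ B := by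
  have hex : ∀ N : ℕ, ∃ C : ℝ, ∀ x, ‖iteratedFDeriv ℝ N f x‖ ≤ C := fun N =>
    Continuous.bounded_above_of_compact_support
      (hf.continuous_iteratedFDeriv (by exact_mod_cast le_top)) (hcs.iteratedFDeriv N)
  choose C hC using hex
  have hsum : (0:ℝ) ≤ ∑ N ∈ Finset.range (d + 1), max (C N) 0 :=
    Finset.sum_nonneg fun i _ => le_max_right _ _
  refine ⟨1 + ∑ N ∈ Finset.range (d + 1), max (C N) 0, by linarith, fun N hN x => ?_⟩
  calc ‖iteratedFDeriv ℝ N f x‖ ≤ C N := hC N x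
    _ ≤ max (C N) 0 := le_max_left _ _
    _ ≤ ∑ N ∈ Finset.range (d + 1), max (C N) 0 :=
        Finset.single_le_sum (f := fun N => max (C N) 0) (fun i _ => le_max_right _ _)
          (Finset.mem_range.mpr (Nat.lt_succ_of_le hN))
    _ ≤ 1 + ∑ N ∈ Finset.range (d + 1), max (C N) 0 := by linarith

/-- scaled, bump-localized monomial with coefficient -/
def sc (A : ℝ) (k : Fin m → ℕ) (ε : ℝ) : E m → ℝ :=
  fun x => (A * ∏ i, ε ^ k i) * psi k (ε⁻¹ • x)

lemma sc_smooth (A : ℝ) (k : Fin m → ℕ) (ε : ℝ) : ContDiff ℝ (⊤ : ℕ∞) (sc A k ε) :=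
  contDiff_const.mul ((psi_smooth k).comp (contDiff_const_smul ε⁻¹))

lemma sc_zero_outside {A : ℝ} {k : Fin m → ℕ} {ε : ℝ} (hε : 0 < ε) {x : E m}
    (hx : x ∉ ball (0 : E m) (2 * ε)) : sc A k ε x = 0 := by
  have h1 : psi k (ε⁻¹ • x) = 0 := by
    by_contra h
    have h2 : ε⁻¹ • x ∈ Function.support (psi k) := h
    have h3 : Function.support (psi k) ⊆ ball (0 : E m) 2 := by
      refine (Function.support_mul_subset_right _ _).trans ?_
      rw [(bump m).support_eq]
      exact subset_rfl
    have h4 : ‖ε⁻¹ • x‖ < 2 := by simpa [mem_ball_zero_iff] using h3 h2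
    apply hx
    rw [mem_ball_zero_iff]
    have : ‖ε⁻¹ • x‖ = ε⁻¹ * ‖x‖ := by
      rw [norm_smul, Real.norm_eq_abs, abs_of_pos (inv_pos.mpr hε)]
    rw [this] at h4
    calc ‖x‖ = ε * (ε⁻¹ * ‖x‖) := by field_simp
      _ < ε * 2 := by exact (mul_lt_mul_iff_right₀ hε).mpr h4
      _ = 2 * ε := by ring
  rw [sc, h1, mul_zero]

lemma sc_eqOn {A : ℝ} {k : Fin m → ℕ} {ε : ℝ} (hε : 0 < ε) :
    Set.EqOn (sc A k ε) (fun x => A * P k x) (ball (0 : E m) ε) := by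
  intro x hx
  rw [mem_ball_zero_iff] at hx
  have hmem : ε⁻¹ • x ∈ closedBall (0 : E m) (bump m).rIn := by
    rw [mem_closedBall_zero_iff]
    have : ‖ε⁻¹ • x‖ = ε⁻¹ * ‖x‖ := by
      rw [norm_smul, Real.norm_eq_abs, abs_of_pos (inv_pos.mpr hε)]
    rw [this]
    show ε⁻¹ * ‖x‖ ≤ 1
    rw [← inv_mul_cancel₀ hε.ne']
    exact mul_le_mul_of_nonneg_left hx.le (inv_pos.mpr hε).le
  have hone : bump m (ε⁻¹ • x) = 1 := (bump m).one_of_mem_closedBall hmem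
  show (A * ∏ i, ε ^ k i) * psi k (ε⁻¹ • x) = A * P k x
  rw [psi, hone, mul_one]
  have hP : P k (ε⁻¹ • x) = ∏ i, (ε⁻¹ * x i) ^ k i := by
    rw [P]; exact Finset.prod_congr rfl fun i _ => by simp
  rw [hP, P]
  rw [mul_assoc, ← Finset.prod_mul_distrib]
  congr 1
  refine Finset.prod_congr rfl fun i _ => ?_
  rw [← mul_pow, ← mul_assoc, mul_inv_cancel₀ hε.ne', one_mul]

lemma sc_bound {A : ℝ} {k : Fin m → ℕ} {ε : ℝ} (hε : 0 < ε) {N : ℕ} {B : ℝ} (hB : 0 ≤ B)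
    (h : ∀ x, ‖iteratedFDeriv ℝ N (psi k) x‖ ≤ B) (x : E m) :
    ‖iteratedFDeriv ℝ N (sc A k ε) x‖ ≤ |A| * (ε ^ (∑ i, k i) * ε⁻¹ ^ N * B) := by
  set g : E m →L[ℝ] E m := ε⁻¹ • ContinuousLinearMap.id ℝ (E m) with hg
  have hgx : ∀ y : E m, g y = ε⁻¹ • y := fun y => rfl
  have hcomp : ContDiff ℝ (⊤ : ℕ∞) (psi k ∘ ⇑g) :=
    (psi_smooth k).comp g.contDiff
  have hsc : sc A k ε = (A * ∏ i, ε ^ k i) • (psi k ∘ ⇑g) := rfl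
  rw [hsc, iteratedFDeriv_const_smul_apply (hcomp.of_le (by exact_mod_cast le_top)).contDiffAt]
  have hns := norm_smul (A * ∏ i, ε ^ k i) (iteratedFDeriv ℝ N (psi k ∘ ⇑g) x)
  rw [hns, Real.norm_eq_abs]
  have hcr : iteratedFDeriv ℝ N (psi k ∘ ⇑g) x
      = (iteratedFDeriv ℝ N (psi k) (g x)).compContinuousLinearMap fun _ => g :=
    g.iteratedFDeriv_comp_right (psi_smooth k) x (by exact_mod_cast le_top)
  have hgn : ‖g‖ ≤ ε⁻¹ := by
    calc ‖g‖ ≤ ‖ε⁻¹‖ * ‖ContinuousLinearMap.id ℝ (E m)‖ :=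
          ContinuousLinearMap.opNorm_smul_le _ _
      _ ≤ ε⁻¹ * 1 := by
          rw [Real.norm_eq_abs, abs_of_pos (inv_pos.mpr hε)]
          exact mul_le_mul_of_nonneg_left ContinuousLinearMap.norm_id_le (inv_pos.mpr hε).le
      _ = ε⁻¹ := mul_one _
  have hnorm : ‖iteratedFDeriv ℝ N (psi k ∘ ⇑g) x‖ ≤ B * ε⁻¹ ^ N := by
    rw [hcr]
    calc ‖(iteratedFDeriv ℝ N (psi k) (g x)).compContinuousLinearMap fun _ => g‖
        ≤ ‖iteratedFDeriv ℝ N (psi k) (g x)‖ * ∏ _i : Fin N, ‖g‖ :=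
          ContinuousMultilinearMap.norm_compContinuousLinearMap_le _ _
      _ ≤ B * ε⁻¹ ^ N := by
          apply mul_le_mul (h _) ?_ (by positivity) hB
          rw [Finset.prod_const, Finset.card_univ, Fintype.card_fin]
          exact pow_le_pow_left₀ (norm_nonneg _) hgn N
  have habs : |A * ∏ i, ε ^ k i| = |A| * ε ^ (∑ i, k i) := by
    rw [abs_mul, Finset.prod_pow_eq_pow_sum, abs_of_pos (pow_pos hε _)]
  rw [habs]
  calc |A| * ε ^ (∑ i, k i) * ‖iteratedFDeriv ℝ N (psi k ∘ ⇑g) x‖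
      ≤ |A| * ε ^ (∑ i, k i) * (B * ε⁻¹ ^ N) := by
        apply mul_le_mul_of_nonneg_left hnorm (by positivity)
    _ = |A| * (ε ^ (∑ i, k i) * ε⁻¹ ^ N * B) := by ring

lemma pow_scale_le {ε : ℝ} (hε : 0 < ε) (hε1 : ε ≤ 1) {N d : ℕ} (h : N < d) :
    ε ^ d * ε⁻¹ ^ N ≤ ε := by
  have hd : d = (d - N) + N := by omega
  rw [hd, pow_add, mul_assoc, ← mul_pow, mul_inv_cancel₀ hε.ne', one_pow, mul_one]
  calc ε ^ (d - N) ≤ ε ^ 1 := pow_le_pow_of_le_one hε.le hε1 (by omega)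
    _ = ε := pow_one ε


/-! ### Borel lemma at the origin -/

lemma borel_at_zero (c : (Fin m → ℕ) → ℝ) (r : ℝ) (hr : 0 < r) :
    ∃ φ : E m → ℝ, ContDiff ℝ (⊤ : ℕ∞) φ ∧ (∀ x, x ∉ ball (0 : E m) r → φ x = 0) ∧
      ∀ k, pderivMulti k φ 0 = c k := by
  classical
  -- coefficients
  set a : (Fin m → ℕ) → ℝ := fun k => c k / ∏ i, ((k i).factorial : ℝ) with ha
  -- summable positive weights
  obtain ⟨enc, henc⟩ := exists_injective_nat (Fin m → ℕ)
  set u : (Fin m → ℕ) → ℝ := fun k => (1 / 2 : ℝ) ^ enc k with hu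
  have hupos : ∀ k, 0 < u k := fun k => by positivity
  have husum : Summable u := by
    have := (summable_geometric_of_lt_one (r := (1/2 : ℝ)) (by norm_num) (by norm_num))
    exact this.comp_injective henc
  -- bounds for the unscaled functions
  have hBex : ∀ k : Fin m → ℕ, ∃ B : ℝ, 1 ≤ B ∧
      ∀ N ≤ ∑ i, k i, ∀ x, ‖iteratedFDeriv ℝ N (psi k) x‖ ≤ B := fun k =>
    exists_bound (psi_smooth k) (psi_compact_support k) _
  choose B hB1 hBle using hBex
  have hBpos : ∀ k, (0:ℝ) < B k := fun k => lt_of_lt_of_le one_pos (hB1 k)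
  -- choice of scales
  set ε : (Fin m → ℕ) → ℝ := fun k =>
    min (r / 4) (min (1 / 2) (u k / (B k * (|a k| + 1)))) with hε
  have hεpos : ∀ k, 0 < ε k := by
    intro k
    have h1 : 0 < u k / (B k * (|a k| + 1)) := by
      apply div_pos (hupos k)
      have := hBpos k
      positivity
    exact lt_min (by linarith) (lt_min (by norm_num) h1)
  have hεr : ∀ k, ε k ≤ r / 4 := fun k => min_le_left _ _
  have hεhalf : ∀ k, ε k ≤ 1 / 2 := fun k => (min_le_right _ _).trans (min_le_left _ _)
  have hεu : ∀ k, ε k ≤ u k / (B k * (|a k| + 1)) := fun k =>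
    (min_le_right _ _).trans (min_le_right _ _)
  -- the terms
  set term : (Fin m → ℕ) → E m → ℝ := fun k => sc (a k) k (ε k) with hterm
  have hterm_smooth : ∀ k, ContDiff ℝ (⊤ : ℕ∞) (term k) := fun k => sc_smooth _ _ _
  -- bounds for high-order derivatives of each term (any order)
  have hCex : ∀ (k : Fin m → ℕ) (N : ℕ), ∃ C : ℝ, 0 ≤ C ∧
      ∀ x, ‖iteratedFDeriv ℝ N (term k) x‖ ≤ C := by
    intro k N
    have hcs : HasCompactSupport (term k) := by
      apply HasCompactSupport.intro (isCompact_closedBall (0 : E m) (2 * ε k))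
      intro x hx
      apply sc_zero_outside (hεpos k)
      intro hmem
      exact hx (ball_subset_closedBall hmem)
    obtain ⟨C, hC1, hCle⟩ := exists_bound (hterm_smooth k) hcs N
    exact ⟨C, zero_le_one.trans hC1, fun x => hCle N le_rfl x⟩
  choose C hC0 hCle using hCex
  -- the key smallness estimate
  have hkey : ∀ (N : ℕ) (k : Fin m → ℕ), N < ∑ i, k i →
      ∀ x, ‖iteratedFDeriv ℝ N (term k) x‖ ≤ u k := by
    intro N k hN x
    have h1 := sc_bound (A := a k) (hεpos k) (hBpos k).le
      (fun y => hBle k N (le_of_lt hN) y) x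
    refine h1.trans ?_
    have h2 : ε k ^ (∑ i, k i) * (ε k)⁻¹ ^ N ≤ ε k :=
      pow_scale_le (hεpos k) (by linarith [hεhalf k]) hN
    calc |a k| * (ε k ^ (∑ i, k i) * (ε k)⁻¹ ^ N * B k)
        ≤ |a k| * (ε k * B k) := by
          apply mul_le_mul_of_nonneg_left _ (abs_nonneg _)
          exact mul_le_mul_of_nonneg_right h2 (hBpos k).le
      _ = (|a k| * B k) * ε k := by ring
      _ ≤ (B k * (|a k| + 1)) * (u k / (B k * (|a k| + 1))) := by
          have hX : (0:ℝ) < B k * (|a k| + 1) := mul_pos (hBpos k) (by positivity)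
          apply mul_le_mul _ (hεu k) (hεpos k).le hX.le
          nlinarith [abs_nonneg (a k), hBpos k]
      _ = u k := by
          have hX : (0:ℝ) < B k * (|a k| + 1) := mul_pos (hBpos k) (by positivity)
          rw [mul_comm]
          exact div_mul_cancel₀ _ hX.ne'
  -- the summable bounds (for every order)
  set v : ℕ → (Fin m → ℕ) → ℝ := fun N k => if ∑ i, k i ≤ N then C k N else u k with hv
  have hvle : ∀ (N : ℕ) (k : Fin m → ℕ) (x : E m),
      ‖iteratedFDeriv ℝ N (term k) x‖ ≤ v N k := by
    intro N k x
    by_cases h : ∑ i, k i ≤ N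
    · simpa [hv, h] using hCle k N x
    · rw [hv]
      simp only [if_neg h]
      exact hkey N k (by omega) x
  have hvsum : ∀ N : ℕ, Summable (v N) := by
    intro N
    set w : (Fin m → ℕ) → ℝ := fun k => if ∑ i, k i ≤ N then C k N else 0 with hw
    have hwfin : (Function.support w).Finite := by
      apply Set.Finite.subset (Set.Finite.pi (fun _ : Fin m => Set.finite_Iic N))
      intro k hk
      rw [Set.mem_pi]
      intro i _
      rw [Set.mem_Iic]
      by_contra hlt
      have hdeg : ¬ (∑ i, k i ≤ N) := by
        have : k i ≤ ∑ i, k i := Finset.single_le_sum (fun _ _ => Nat.zero_le _)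
          (Finset.mem_univ i)
        omega
      apply hk
      simp [hw, hdeg]
    have hwsum : Summable w := summable_of_finite_support hwfin
    apply Summable.of_nonneg_of_le (f := fun k => u k + w k)
      (fun k => by
        rw [hv]; dsimp only
        split
        · exact hC0 _ _
        · exact (hupos k).le)
      (fun k => by
        rw [hv, hw]; dsimp only
        split
        · have := (hupos k).le; simp only [*, if_pos]; linarith
        · simp only [*, if_neg]; simp)
      (husum.add hwsum)
  -- the function
  refine ⟨fun x => ∑' k, term k x, ?_, ?_, ?_⟩
  · -- smoothness
    exact contDiff_tsum (N := (⊤ : ℕ∞)) (fun k => hterm_smooth k)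
      (fun N _ => hvsum N) (fun N k x _ => hvle N k x)
  · -- support
    intro x hx
    have hzero : ∀ k, term k x = 0 := by
      intro k
      apply sc_zero_outside (hεpos k)
      intro hmem
      apply hx
      rw [mem_ball_zero_iff] at hmem ⊢
      calc ‖x‖ < 2 * ε k := hmem
        _ ≤ 2 * (r / 4) := by linarith [hεr k]
        _ < r := by linarith
    simp [hzero]
  · -- derivatives at 0
    intro idx
    have hBnd : Bnd term := fun N => ⟨v N, hvsum N, hvle N⟩
    rw [pderivMulti_tsum hterm_smooth hBnd idx 0]
    have hptwise : ∀ k, pderivMulti idx (term k) 0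
        = if k = idx then c k else 0 := by
      intro k
      have h0mem : (0 : E m) ∈ ball (0 : E m) (ε k) := mem_ball_self (hεpos k)
      rw [pderivMulti_congr isOpen_ball (sc_eqOn (hεpos k)) idx h0mem,
        pderivMulti_cP_zero]
      by_cases h : k = idx
      · subst h
        rw [if_pos rfl, if_pos rfl, ha]
        have hfac : (∏ i, ((k i).factorial : ℝ)) ≠ 0 := by
          apply Finset.prod_ne_zero_iff.mpr
          intro i _
          exact_mod_cast (Nat.factorial_pos (k i)).ne'
        field_simp
      · rw [if_neg h, if_neg h]
    calc ∑' k, pderivMulti idx (term k) 0 = ∑' k, if k = idx then c k else 0 := by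
          exact tsum_congr hptwise
      _ = c idx := by
          rw [tsum_eq_single idx (fun b hb => if_neg hb)]
          simp


lemma borel_at (z : E m) (c : (Fin m → ℕ) → ℝ) (r : ℝ) (hr : 0 < r) :
    ∃ φ : E m → ℝ, ContDiff ℝ (⊤ : ℕ∞) φ ∧ (∀ x, x ∉ ball z r → φ x = 0) ∧
      ∀ k, pderivMulti k φ z = c k := by
  obtain ⟨φ0, hsm, hsupp, hder⟩ := borel_at_zero (m := m) c r hr
  refine ⟨fun x => φ0 (x - z), contDiff_comp_sub hsm z, ?_, ?_⟩
  · intro x hx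
    apply hsupp
    rw [mem_ball_zero_iff]
    rw [mem_ball_iff_norm] at hx
    exact hx
  · intro k
    rw [pderivMulti_comp_sub hsm z k z, sub_self]
    exact hder k

lemma finite_of_separated {S : Set (E m)} {x0 : E m} {R ε : ℝ} (hε : 0 < ε)
    (hS : S ⊆ closedBall x0 R)
    (hsep : ∀ p ∈ S, ∀ q ∈ S, p ≠ q → ε ≤ dist p q) : S.Finite := by
  obtain ⟨t, htfin, hcov⟩ :=
    (totallyBounded_iff.mp (isCompact_closedBall x0 R).totallyBounded) (ε/2) (by linarith)
  have hsub : S ⊆ ⋃ y ∈ t, (S ∩ ball y (ε/2)) := by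
    intro p hp
    obtain ⟨y, hy, hpy⟩ := Set.mem_iUnion₂.mp (hcov (hS hp))
    exact Set.mem_iUnion₂.mpr ⟨y, hy, hp, hpy⟩
  apply Set.Finite.subset _ hsub
  apply Set.Finite.biUnion htfin
  intro y _
  apply Set.Subsingleton.finite
  intro p hp q hq
  by_contra hpq
  have h1 : ε ≤ dist p q := hsep p hp.1 q hq.1 hpq
  have h2 : dist p q < ε := by
    calc dist p q ≤ dist p y + dist y q := dist_triangle _ _ _
      _ < ε/2 + ε/2 := by
          have hp2 := hp.2
          have hq2 := hq.2
          rw [mem_ball] at hp2 hq2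
          rw [dist_comm y q]
          exact add_lt_add hp2 hq2
      _ = ε := by ring
  linarith

end MBL

open MBL Metric

/-- multi-point Borel lemma.  Let `Z` be a discrete, relatively closed
subset of an open set `U ⊆ ℝ^m`.  Arbitrary Taylor series can be prescribed simultaneously
at all points of `Z`: for every `a : Z × ℕ^m → ℝ` there is `f ∈ C^∞(U)` with
`∂^k f(z) = a(z, k)` for all `z ∈ Z` and all multi-indices `k`. -/
theorem multipoint_borel_lemma {m : ℕ}
    (U : Set (Fin m → ℝ)) (hU : IsOpen U)
    (Z : Set (Fin m → ℝ)) (hZU : Z ⊆ U)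
    (hZclosed : ∀ x ∈ U, x ∈ closure Z → x ∈ Z)
    (hZdiscrete : DiscreteTopology Z)
    (a : Z → (Fin m → ℕ) → ℝ) :
    ∃ f : (Fin m → ℝ) → ℝ,
      (∀ x ∈ U, ContDiffAt ℝ (⊤ : ℕ∞) f x) ∧
      ∀ (z : Z) (k : Fin m → ℕ), pderivMulti k f z = a z k := by
  classical
  -- radii
  have hrad : ∀ z : Z, ∃ ρ : ℝ, 0 < ρ ∧ ρ ≤ 1 ∧ closedBall (z : E m) (2 * ρ) ⊆ U ∧
      ∀ z' : Z, (z' : E m) ∈ closedBall (z : E m) (2 * ρ) → z' = z := by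
    intro z
    -- isolation
    have hopen : IsOpen ({z} : Set Z) := isOpen_discrete _
    obtain ⟨t, htop, htpre⟩ := isOpen_induced_iff.mp hopen
    have hzt : (z : E m) ∈ t := by
      have : z ∈ Subtype.val ⁻¹' t := htpre ▸ rfl
      exact this
    obtain ⟨ε₁, hε₁, hball₁⟩ := Metric.isOpen_iff.mp htop _ hzt
    obtain ⟨ε₂, hε₂, hball₂⟩ := Metric.isOpen_iff.mp hU _ (hZU z.2)
    refine ⟨min 1 (min ε₁ ε₂ / 3), by positivity, min_le_left _ _, ?_, ?_⟩
    · intro y hy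
      apply hball₂
      rw [mem_closedBall] at hy
      rw [mem_ball]
      have h3 : min 1 (min ε₁ ε₂ / 3) ≤ min ε₁ ε₂ / 3 := min_le_right _ _
      have h4 : min ε₁ ε₂ ≤ ε₂ := min_le_right _ _
      have h5 : 0 < min ε₁ ε₂ := lt_min hε₁ hε₂
      calc dist y (z : E m) ≤ 2 * min 1 (min ε₁ ε₂ / 3) := hy
        _ ≤ 2 * (min ε₁ ε₂ / 3) := by linarith
        _ < min ε₁ ε₂ := by linarith
        _ ≤ ε₂ := h4
    · intro z' hz'
      have hmem : (z' : E m) ∈ t := by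
        apply hball₁
        rw [mem_closedBall] at hz'
        rw [mem_ball]
        have h3 : min 1 (min ε₁ ε₂ / 3) ≤ min ε₁ ε₂ / 3 := min_le_right _ _
        have h4 : min ε₁ ε₂ ≤ ε₁ := min_le_left _ _
        have h5 : 0 < min ε₁ ε₂ := lt_min hε₁ hε₂
        calc dist (z' : E m) (z : E m) ≤ 2 * min 1 (min ε₁ ε₂ / 3) := hz'
          _ ≤ 2 * (min ε₁ ε₂ / 3) := by linarith
          _ < min ε₁ ε₂ := by linarith
          _ ≤ ε₁ := h4
      have : z' ∈ Subtype.val ⁻¹' t := hmem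
      rw [htpre] at this
      exact this
  choose ρ hρpos hρ1 hρU hρsep using hrad
  -- bump functions at each point
  have hφex : ∀ z : Z, ∃ φ : E m → ℝ, ContDiff ℝ (⊤ : ℕ∞) φ ∧
      (∀ x, x ∉ ball (z : E m) (ρ z) → φ x = 0) ∧
      ∀ k, pderivMulti k φ (z : E m) = a z k := fun z =>
    borel_at (z : E m) (a z) (ρ z) (hρpos z)
  choose φ hφsm hφsupp hφder using hφex
  -- disjointness of the supports
  have hdisj : ∀ z z' : Z, z ≠ z' → ∀ x : E m,
      x ∈ closedBall (z : E m) (ρ z) → x ∈ closedBall (z' : E m) (ρ z') → False := by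
    intro z z' hne x hx hx'
    rw [mem_closedBall] at hx hx'
    rcases le_total (ρ z') (ρ z) with h | h
    · apply hne.symm
      apply hρsep z z'
      rw [mem_closedBall]
      calc dist (z' : E m) (z : E m) ≤ dist (z' : E m) x + dist x (z : E m) :=
            dist_triangle _ _ _
        _ ≤ ρ z' + ρ z := by rw [dist_comm (z' : E m) x]; exact add_le_add hx' hx
        _ ≤ 2 * ρ z := by linarith
    · apply hne
      apply hρsep z' z
      rw [mem_closedBall]
      calc dist (z : E m) (z' : E m) ≤ dist (z : E m) x + dist x (z' : E m) :=
            dist_triangle _ _ _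
        _ ≤ ρ z + ρ z' := by rw [dist_comm (z : E m) x]; exact add_le_add hx hx'
        _ ≤ 2 * ρ z' := by linarith
  have hsupp' : ∀ (z : Z) (y : E m), φ z y ≠ 0 → y ∈ closedBall (z : E m) (ρ z) := by
    intro z y hy
    by_contra h
    exact hy (hφsupp z y (fun hball => h (ball_subset_closedBall hball)))
  -- the glued function
  set f : E m → ℝ := fun x => ∑ᶠ z : Z, φ z x with hf
  -- local structure
  have hloc : ∀ x ∈ U, ∃ δ > 0,
      (∃ z₀ : Z, ∀ z : Z, z ≠ z₀ → ∀ y ∈ ball x δ, φ z y = 0) ∨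
      (∀ z : Z, ∀ y ∈ ball x δ, φ z y = 0) := by
    intro x hxU
    by_cases hxZ : x ∈ Z
    · set z₀ : Z := ⟨x, hxZ⟩ with hz₀
      refine ⟨ρ z₀, hρpos z₀, Or.inl ⟨z₀, ?_⟩⟩
      intro z hz y hy
      by_contra hφy
      exact hdisj z z₀ hz y (hsupp' z y hφy) (ball_subset_closedBall hy)
    · -- x is not in Z, positive distance to Z
      have hxcl : x ∉ closure Z := fun h => hxZ (hZclosed x hxU h)
      rw [Metric.mem_closure_iff] at hxcl
      push_neg at hxcl
      obtain ⟨ε, hε, hεZ⟩ := hxcl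
      -- the set of nearby supports
      set F : Set Z := {z : Z | (closedBall (z : E m) (ρ z) ∩ ball x (ε/2)).Nonempty}
        with hF
      have hFρ : ∀ z ∈ F, ε/2 ≤ ρ z ∧ dist (z : E m) x ≤ 1 + ε/2 := by
        intro z hz
        obtain ⟨y, hy1, hy2⟩ := hz
        rw [mem_closedBall] at hy1
        rw [mem_ball] at hy2
        have hd : ε ≤ dist x (z : E m) := hεZ _ z.2
        have h1 : dist (z : E m) x ≤ ρ z + ε/2 := by
          calc dist (z : E m) x ≤ dist (z : E m) y + dist y x := dist_triangle _ _ _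
            _ ≤ ρ z + ε/2 := add_le_add (by rw [dist_comm]; exact hy1) hy2.le
        rw [dist_comm] at hd
        constructor
        · linarith
        · have := hρ1 z
          linarith
      have hFfin : F.Finite := by
        have himfin : (Subtype.val '' F).Finite := by
          apply finite_of_separated (x0 := x) (R := 1 + ε/2) (by positivity : (0:ℝ) < ε)
          · rintro p ⟨z, hz, rfl⟩
            rw [mem_closedBall]
            exact (hFρ z hz).2
          · rintro p ⟨z, hz, rfl⟩ q ⟨z', hz', rfl⟩ hne
            have hzz' : z ≠ z' := fun h => hne (by rw [h])
            have h2 : ¬ ((z' : E m) ∈ closedBall (z : E m) (2 * ρ z)) := by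
              intro h
              exact hzz' (hρsep z z' h).symm
            rw [mem_closedBall, not_le] at h2
            have h3 := (hFρ z hz).1
            calc ε = 2 * (ε/2) := by ring
              _ ≤ 2 * ρ z := by linarith
              _ ≤ dist (z' : E m) (z : E m) := h2.le
              _ = dist (z : E m) (z' : E m) := dist_comm _ _
        exact Set.Finite.of_finite_image himfin (Set.injOn_of_injective Subtype.val_injective)
      set G : Set Z := {z ∈ F | x ∉ closedBall (z : E m) (ρ z)} with hG
      have hGfin : G.Finite := hFfin.subset (fun z hz => hz.1)
      -- choose δ
      set T : Finset ℝ := insert (ε/2)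
        (Finset.image (fun z : Z => dist x (z : E m) - ρ z) hGfin.toFinset) with hT
      have hTne : T.Nonempty := ⟨ε/2, Finset.mem_insert_self _ _⟩
      set δ : ℝ := T.min' hTne with hδ
      have hδpos : 0 < δ := by
        have hpos : ∀ y ∈ T, 0 < y := by
          intro y hyT
          rw [hT] at hyT
          rcases Finset.mem_insert.mp hyT with h | h
          · rw [h]; positivity
          · obtain ⟨z, hzG, rfl⟩ := Finset.mem_image.mp h
            rw [Set.Finite.mem_toFinset] at hzG
            have hx2 := hzG.2
            rw [mem_closedBall, not_le] at hx2
            linarith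
        rw [hδ]
        exact (Finset.lt_min'_iff T hTne).mpr hpos
      have hδε : δ ≤ ε/2 := Finset.min'_le _ _ (Finset.mem_insert_self _ _)
      have hδG : ∀ z ∈ G, δ ≤ dist x (z : E m) - ρ z := by
        intro z hz
        apply Finset.min'_le
        rw [hT]
        apply Finset.mem_insert_of_mem
        exact Finset.mem_image.mpr ⟨z, (Set.Finite.mem_toFinset _).mpr hz, rfl⟩
      -- key vanishing claim
      have hvanish : ∀ z : Z, (∀ y ∈ ball x δ, φ z y = 0) ∨
          (x ∈ closedBall (z : E m) (ρ z)) := by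
        intro z
        by_cases hxz : x ∈ closedBall (z : E m) (ρ z)
        · exact Or.inr hxz
        · left
          intro y hy
          by_contra hφy
          have hyz : y ∈ closedBall (z : E m) (ρ z) := hsupp' z y hφy
          have hzF : z ∈ F := ⟨y, hyz, by
            rw [mem_ball] at hy ⊢
            exact lt_of_lt_of_le hy hδε⟩
          have hzG : z ∈ G := ⟨hzF, hxz⟩
          have h1 := hδG z hzG
          rw [mem_ball] at hy
          rw [mem_closedBall] at hyz
          have h2 : dist x (z : E m) ≤ dist x y + dist y (z : E m) := dist_triangle _ _ _
          have h3 : dist x y = dist y x := dist_comm _ _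
          linarith
      by_cases hex : ∃ z₀ : Z, x ∈ closedBall (z₀ : E m) (ρ z₀)
      · obtain ⟨z₀, hz₀⟩ := hex
        refine ⟨δ, hδpos, Or.inl ⟨z₀, ?_⟩⟩
        intro z hz y hy
        rcases hvanish z with h | h
        · exact h y hy
        · exact absurd (hdisj z z₀ hz x h hz₀) not_false
      · refine ⟨δ, hδpos, Or.inr ?_⟩
        intro z y hy
        rcases hvanish z with h | h
        · exact h y hy
        · exact absurd ⟨z, h⟩ hex
  refine ⟨f, ?_, ?_⟩
  · -- smoothness on U
    intro x hxU
    obtain ⟨δ, hδpos, hcase⟩ := hloc x hxU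
    rcases hcase with ⟨z₀, hz₀⟩ | hall
    · have heq : Set.EqOn f (φ z₀) (ball x δ) := by
        intro y hy
        exact finsum_eq_single (fun z => φ z y) z₀ (fun z hz => hz₀ z hz y hy)
      exact ((hφsm z₀).contDiffAt).congr_of_eventuallyEq
        (heq.eventuallyEq_of_mem (ball_mem_nhds x hδpos))
    · have heq : Set.EqOn f (fun _ => (0:ℝ)) (ball x δ) := by
        intro y hy
        exact finsum_eq_zero_of_forall_eq_zero (fun z => hall z y hy)
      exact (contDiffAt_const).congr_of_eventuallyEq
        (heq.eventuallyEq_of_mem (ball_mem_nhds x hδpos))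
  · -- derivatives
    intro z k
    have heq : Set.EqOn f (φ z) (ball (z : E m) (ρ z)) := by
      intro y hy
      apply finsum_eq_single (fun z' => φ z' y) z
      intro z' hz'
      by_contra hφy
      exact hdisj z' z hz' y (hsupp' z' y hφy) (ball_subset_closedBall hy)
    rw [pderivMulti_congr isOpen_ball heq k (mem_ball_self (hρpos z))]
    exact hφder z k

end
end

section
/- Let B̄ ⊆ ℝ^m be a closed ball, Z ⊆ B̄ a nonempty closed set, and j ≥ 1 an integer. Let g be a smooth real-valued function defined on an open set containing B̄, and suppose that for every z ∈ Z and every i < j the i-th iterated Fréchet derivative of g at z is zero. Then there exists a constant C > 0 such that for every x ∈ B̄ and every i < j, the operator norm of the i-th iterated Fréchet derivative of g at x is at most C · dist(x, Z)^{j−i}, where dist(x, Z) is the infimum of distances from x to points of Z. -/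
open Filter Topology

/-- Taylor-type bounds near the vanishing locus.  Let `B̄` be a closed
ball in `ℝ^m`, `Z ⊆ B̄` a nonempty closed set, and `g` a smooth function on an open set
containing `B̄` all of whose derivatives of order `< j` vanish on `Z`.  Then there is a
constant `C > 0` with `‖D^i g(x)‖ ≤ C · dist(x, Z)^{j−i}` for all `x ∈ B̄` and `i < j`. -/
theorem derivative_bounds_near_zero_locus {m : ℕ}
    (c : Fin m → ℝ) (R : ℝ)
    (Z : Set (Fin m → ℝ)) (hZne : Z.Nonempty) (hZclosed : IsClosed Z)
    (hZB : Z ⊆ Metric.closedBall c R)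
    (j : ℕ) (hj : 1 ≤ j)
    (O : Set (Fin m → ℝ)) (hO : IsOpen O) (hBO : Metric.closedBall c R ⊆ O)
    (g : (Fin m → ℝ) → ℝ) (hg : ∀ x ∈ O, ContDiffAt ℝ (⊤ : ℕ∞) g x)
    (hflat : ∀ z ∈ Z, ∀ i < j, iteratedFDeriv ℝ i g z = 0) :
    ∃ C > (0 : ℝ), ∀ x ∈ Metric.closedBall c R, ∀ i < j,
      ‖iteratedFDeriv ℝ i g x‖ ≤ C * Metric.infDist x Z ^ (j - i) := by
  have hconv : Convex ℝ (Metric.closedBall c R) := convex_closedBall c R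
  have hIt : ∀ (i : ℕ), ∀ x ∈ O, ContDiffAt ℝ (⊤ : ℕ∞) (iteratedFDeriv ℝ i g) x :=
    fun i x hx => (hg x hx).iteratedFDeriv_right (by exact_mod_cast le_top)
  have key : ∀ n : ℕ, n ≤ j → ∃ C, 0 < C ∧ ∀ x ∈ Metric.closedBall c R,
      ‖iteratedFDeriv ℝ (j - n) g x‖ ≤ C * Metric.infDist x Z ^ n := by
    intro n
    induction n with
    | zero =>
      intro _
      obtain ⟨M, hM⟩ := (isCompact_closedBall c R).exists_bound_of_continuousOn
        (fun x hx => ((hIt j x (hBO hx)).continuousAt).continuousWithinAt)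
      refine ⟨max M 1, lt_of_lt_of_le one_pos (le_max_right _ _), fun x hx => ?_⟩
      simp only [pow_zero, mul_one, Nat.sub_zero]
      exact (hM x hx).trans (le_max_left _ _)
    | succ n ih =>
      intro hn
      obtain ⟨C, hC, hCb⟩ := ih (Nat.le_of_succ_le hn)
      have hji : j - n = (j - (n + 1)) + 1 := by omega
      refine ⟨C, hC, fun x hx => ?_⟩
      set i := j - (n + 1) with hi
      obtain ⟨z, hzZ, hz⟩ := hZclosed.exists_infDist_eq_dist hZne x
      have hzB : z ∈ Metric.closedBall c R := hZB hzZ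
      have hseg : segment ℝ z x ⊆ Metric.closedBall c R := hconv.segment_subset hzB hx
      have hzero : iteratedFDeriv ℝ i g z = 0 := hflat z hzZ i (by omega)
      have hdiff : ∀ y ∈ segment ℝ z x, DifferentiableAt ℝ (iteratedFDeriv ℝ i g) y :=
        fun y hy => (hIt i y (hBO (hseg hy))).differentiableAt (by simp)
      have hbound : ∀ y ∈ segment ℝ z x,
          ‖fderiv ℝ (iteratedFDeriv ℝ i g) y‖ ≤ C * Metric.infDist x Z ^ n := by
        intro y hy
        have h1 : ‖fderiv ℝ (iteratedFDeriv ℝ i g) y‖ = ‖iteratedFDeriv ℝ (i + 1) g y‖ := by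
          rw [fderiv_iteratedFDeriv]
          simp [LinearIsometryEquiv.norm_map]
        have h2 : ‖iteratedFDeriv ℝ (i + 1) g y‖ ≤ C * Metric.infDist y Z ^ n := by
          have := hCb y (hseg hy)
          rwa [hji] at this
        have hdy : Metric.infDist y Z ≤ Metric.infDist x Z := by
          have hle : ‖y - z‖ ≤ ‖x - z‖ := by
            rw [segment_eq_image'] at hy
            obtain ⟨t, ht, rfl⟩ := hy
            simp only [add_sub_cancel_left, norm_smul, Real.norm_eq_abs,
              abs_of_nonneg ht.1]
            exact mul_le_of_le_one_left (norm_nonneg _) ht.2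
          calc Metric.infDist y Z ≤ dist y z := Metric.infDist_le_dist_of_mem hzZ
            _ = ‖y - z‖ := dist_eq_norm _ _
            _ ≤ ‖x - z‖ := hle
            _ = dist x z := (dist_eq_norm _ _).symm
            _ = Metric.infDist x Z := hz.symm
        calc ‖fderiv ℝ (iteratedFDeriv ℝ i g) y‖ = ‖iteratedFDeriv ℝ (i + 1) g y‖ := h1
          _ ≤ C * Metric.infDist y Z ^ n := h2
          _ ≤ C * Metric.infDist x Z ^ n := by
              exact mul_le_mul_of_nonneg_left
                (pow_le_pow_left₀ Metric.infDist_nonneg hdy n) hC.le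
      have hmvt := (convex_segment z x).norm_image_sub_le_of_norm_fderiv_le
        hdiff hbound (left_mem_segment ℝ z x) (right_mem_segment ℝ z x)
      rw [hzero, sub_zero] at hmvt
      calc ‖iteratedFDeriv ℝ i g x‖ ≤ C * Metric.infDist x Z ^ n * ‖x - z‖ := hmvt
        _ = C * Metric.infDist x Z ^ (n + 1) := by
            rw [← dist_eq_norm, ← hz, pow_succ]
            ring
  have hQ : ∀ i : ℕ, i < j → ∃ C, 0 < C ∧ ∀ x ∈ Metric.closedBall c R,
      ‖iteratedFDeriv ℝ i g x‖ ≤ C * Metric.infDist x Z ^ (j - i) := by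
    intro i hi
    obtain ⟨C, hC, hCb⟩ := key (j - i) (by omega)
    have hii : j - (j - i) = i := by omega
    rw [hii] at hCb
    exact ⟨C, hC, hCb⟩
  choose! Cf hCpos hCb using hQ
  refine ⟨∑ i ∈ Finset.range j, Cf i, ?_, ?_⟩
  · exact Finset.sum_pos (fun i hi => hCpos i (Finset.mem_range.mp hi))
      ⟨0, Finset.mem_range.mpr hj⟩
  · intro x hx i hi
    calc ‖iteratedFDeriv ℝ i g x‖ ≤ Cf i * Metric.infDist x Z ^ (j - i) := hCb i hi x hx
      _ ≤ (∑ k ∈ Finset.range j, Cf k) * Metric.infDist x Z ^ (j - i) := by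
          apply mul_le_mul_of_nonneg_right
          · exact Finset.single_le_sum
              (fun k hk => (hCpos k (Finset.mem_range.mp hk)).le) (Finset.mem_range.mpr hi)
          · exact pow_nonneg Metric.infDist_nonneg _
end
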